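/- For ε ∈ (0,1), let (A,B,C,D) be binary random variables with joint distribution P(A=0,B=0,C=0,D=1) = P(A=0,B=1,C=0,D=0) = P(A=1,B=0,C=0,D=1) = P(A=1,B=1,C=0,D=1) = (1-ε)/4 and P(A=1,B=0,C=1,D=1) = ε. Then I(C:D|A) = 0, I(C:D|B) = 0, and I(A:B|C) = 0. -/

import Mathlib

open scoped BigOperators Classical

noncomputable section

/-- `p` is a probability mass function on the finite type `Ω`. -/
def IsPMF {Ω : Type*} [Fintype Ω] (p : Ω → ℝ) : Prop :=
  (∀ ω, 0 ≤ p ω) ∧ ∑ ω, p ω = 1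

/-- Probability of the event `X = s` under `p`. -/
def prOf {Ω S : Type*} [Fintype Ω] [DecidableEq S] (p : Ω → ℝ) (X : Ω → S) (s : S) : ℝ :=
  ∑ ω ∈ Finset.univ.filter (fun ω => X ω = s), p ω

/-- Shannon entropy (in bits) of the random variable `X` under the pmf `p`. -/
def ent {Ω S : Type*} [Fintype Ω] [Fintype S] [DecidableEq S] (p : Ω → ℝ) (X : Ω → S) : ℝ :=
  - ∑ s : S, prOf p X s * Real.logb 2 (prOf p X s)

/-- Mutual information `I(X:Y) = H(X) + H(Y) - H(X,Y)`. -/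
def mi {Ω S T : Type*} [Fintype Ω] [Fintype S] [Fintype T] [DecidableEq S] [DecidableEq T]
    (p : Ω → ℝ) (X : Ω → S) (Y : Ω → T) : ℝ :=
  ent p X + ent p Y - ent p (fun ω => (X ω, Y ω))

/-- Conditional mutual information `I(X:Y|Z) = H(X,Z) + H(Y,Z) - H(X,Y,Z) - H(Z)`. -/
def cmi {Ω S T U : Type*} [Fintype Ω] [Fintype S] [Fintype T] [Fintype U]
    [DecidableEq S] [DecidableEq T] [DecidableEq U]
    (p : Ω → ℝ) (X : Ω → S) (Y : Ω → T) (Z : Ω → U) : ℝ :=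
  ent p (fun ω => (X ω, Z ω)) + ent p (fun ω => (Y ω, Z ω))
    - ent p (fun ω => (X ω, Y ω, Z ω)) - ent p Z

/-- Conditional entropy `H(X|Y) = H(X,Y) - H(Y)`. -/
def condEnt {Ω S T : Type*} [Fintype Ω] [Fintype S] [Fintype T] [DecidableEq S] [DecidableEq T]
    (p : Ω → ℝ) (X : Ω → S) (Y : Ω → T) : ℝ :=
  ent p (fun ω => (X ω, Y ω)) - ent p Y

/-- The four coordinate random variables on `Bool × Bool × Bool × Bool`. -/
def vA : Bool × Bool × Bool × Bool → Bool := fun ω => ω.1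
def vB : Bool × Bool × Bool × Bool → Bool := fun ω => ω.2.1
def vC : Bool × Bool × Bool × Bool → Bool := fun ω => ω.2.2.1
def vD : Bool × Bool × Bool × Bool → Bool := fun ω => ω.2.2.2

/-- The witness distribution of Theorem 3(a). -/
def p10 (ε : ℝ) : Bool × Bool × Bool × Bool → ℝ := fun ω =>
  if ω = (false, false, false, true) then (1 - ε) / 4
  else if ω = (false, true, false, false) then (1 - ε) / 4
  else if ω = (true, false, false, true) then (1 - ε) / 4
  else if ω = (true, true, false, true) then (1 - ε) / 4
  else if ω = (true, false, true, true) then ε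
  else 0

theorem p10_conditional_independences (ε : ℝ) (h0 : 0 < ε) (h1 : ε < 1) :
    cmi (p10 ε) vC vD vA = 0 ∧ cmi (p10 ε) vC vD vB = 0 ∧
      cmi (p10 ε) vA vB vC = 0 := by
  have hx : (0:ℝ) < 1 - ε := by linarith
  have l2 : Real.logb 2 ((1 - ε) / 2) = Real.logb 2 (1 - ε) - 1 := by
    rw [Real.logb_div hx.ne' two_ne_zero, Real.logb_self_eq_one] <;> norm_num
  have l4 : Real.logb 2 ((1 - ε) / 4) = Real.logb 2 (1 - ε) - 2 := by
    rw [Real.logb_div hx.ne' (by norm_num : (4:ℝ) ≠ 0),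
      show (4:ℝ) = 2 ^ (2:ℕ) by norm_num, Real.logb_pow, Real.logb_self_eq_one] <;> norm_num
  refine ⟨?_, ?_, ?_⟩ <;>
    simp only [cmi, ent, prOf, Finset.sum_filter] <;>
    simp only [Fintype.sum_prod_type, Fintype.sum_bool,
      p10, vA, vB, vC, vD] <;>
    norm_num <;>
    ring_nf <;>
    rw [show (1:ℝ)/2 + ε*(-1/2) = (1-ε)/2 by ring, show (1:ℝ)/4 + ε*(-1/4) = (1-ε)/4 by ring,
      l2, l4] <;>
    ring

end
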